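/- Let G = ZMod 2 act on the finite set A, and suppose the nontrivial element σ ∈ G has at most one fixed point in A. Then for any two twisted 1-cocycles δ₁ and δ₂, the representations ρ(δ₁) and ρ(δ₂) are isomorphic (i.e. there exists a ℂ-linear automorphism φ of A → ℂ with φ ∘ ρ(δ₁)(g) = ρ(δ₂)(g) ∘ φ for all g ∈ G) if and only if δ₁ · δ₂⁻¹ is a coboundary. -/

import Mathlib

section

variable {G A : Type*} [AddCommGroup G] [Fintype A] [DecidableEq A] [AddAction G A]

/-- A twisted 1-cocycle of `G` with values in `(ℂˣ)^A`. -/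
def IsCocycle (δ : G → A → ℂˣ) : Prop :=
  ∀ (g h : G) (a : A), δ (g + h) a = δ g (h +ᵥ a) * δ h a

/-- A coboundary. -/
def IsCoboundary (δ : G → A → ℂˣ) : Prop :=
  ∃ c : A → ℂˣ, ∀ (g : G) (a : A), δ g a = c (g +ᵥ a) * (c a)⁻¹

/-- The linear endomorphism `ρ(δ)(g)` of `A → ℂ` determined on the standard basis
`(e_a)_{a ∈ A}` by `ρ(δ)(g)(e_a) = δ(g)(a) • e_{g • a}`. -/
noncomputable def rho (δ : G → A → ℂˣ) (g : G) : (A → ℂ) →ₗ[ℂ] (A → ℂ) :=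
  (Pi.basisFun ℂ A).constr ℂ fun a => ((δ g a : ℂ) • Pi.basisFun ℂ A (g +ᵥ a))

end

section
set_option linter.unusedSectionVars false
variable {G A : Type*} [AddCommGroup G] [Fintype A] [DecidableEq A] [AddAction G A]

lemma cocycle_zero {δ : G → A → ℂˣ} (h : IsCocycle δ) (a : A) : δ 0 a = 1 := by
  have h0 := h 0 0 a
  rw [add_zero, zero_vadd] at h0
  exact (right_eq_mul.mp h0)

lemma rho_apply (δ : G → A → ℂˣ) (g : G) (x : A → ℂ) (b : A) :
    rho δ g x b = (δ g (-g +ᵥ b) : ℂ) * x (-g +ᵥ b) := by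
  simp only [rho, Module.Basis.constr_apply_fintype, Pi.basisFun_equivFun, LinearEquiv.refl_apply]
  rw [Finset.sum_apply]
  rw [Finset.sum_eq_single (-g +ᵥ b)]
  · simp [Pi.basisFun_apply, vadd_vadd, mul_comm]
    try exact h.symm
  · intro a _ ha
    have : g +ᵥ a ≠ b := fun hb => ha (by rw [← hb, vadd_vadd, neg_add_cancel, zero_vadd])
    simp [Pi.basisFun_apply, Pi.single_apply, this]
  · intro h; exact absurd (Finset.mem_univ _) h

lemma rho_trace (δ : G → A → ℂˣ) (g : G) :
    LinearMap.trace ℂ _ (rho δ g) = ∑ a : A, if g +ᵥ a = a then (δ g a : ℂ) else 0 := by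
  rw [LinearMap.trace_eq_matrix_trace ℂ (Pi.basisFun ℂ A), Matrix.trace]
  congr 1
  ext a
  rw [Matrix.diag_apply, LinearMap.toMatrix_apply, Pi.basisFun_repr, rho_apply]
  by_cases h : g +ᵥ a = a
  · have ha : -g +ᵥ a = a := by
      conv_lhs => rw [← h]
      rw [vadd_vadd, neg_add_cancel, zero_vadd]
    simp [h, ha, Pi.basisFun_apply, Pi.single_apply]
  · have ha : -g +ᵥ a ≠ a := fun hb => h (by
      conv_lhs => rw [← hb]
      rw [vadd_vadd, add_neg_cancel, zero_vadd])
    simp [h, ha, Pi.basisFun_apply, Pi.single_apply]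

end

/-- let `G = ZMod 2` act on the finite set `A` and suppose the nontrivial
element `σ = 1` has at most one fixed point in `A`.  Then for twisted 1-cocycles `δ₁`,
`δ₂`, the representations `ρ(δ₁)` and `ρ(δ₂)` are isomorphic if and only if
`δ₁ · δ₂⁻¹` is a coboundary. -/
theorem rho_isomorphic_iff_cohomologous_of_zmod2
    {A : Type*} [Fintype A] [DecidableEq A] [AddAction (ZMod 2) A]
    (hfix : {a : A | (1 : ZMod 2) +ᵥ a = a}.Subsingleton)
    (δ₁ δ₂ : ZMod 2 → A → ℂˣ) (h₁ : IsCocycle δ₁) (h₂ : IsCocycle δ₂) :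
    (∃ φ : (A → ℂ) ≃ₗ[ℂ] (A → ℂ),
        ∀ (g : ZMod 2) (x : A → ℂ), φ (rho δ₁ g x) = rho δ₂ g (φ x)) ↔
      IsCoboundary (fun g a => δ₁ g a * (δ₂ g a)⁻¹) := by
  have hg2 : ∀ g : ZMod 2, g = 0 ∨ g = 1 := by decide
  have hinvol : ∀ a : A, (1 : ZMod 2) +ᵥ ((1 : ZMod 2) +ᵥ a) = a := by
    intro a
    rw [vadd_vadd]
    have h11 : (1 + 1 : ZMod 2) = 0 := by decide
    rw [h11, zero_vadd]
  constructor
  · rintro ⟨φ, hφ⟩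
    -- traces are equal
    have htr : LinearMap.trace ℂ _ (rho δ₁ (1 : ZMod 2)) =
        LinearMap.trace ℂ _ (rho δ₂ (1 : ZMod 2)) := by
      have : φ.conj (rho δ₁ 1) = rho δ₂ 1 := by
        ext x
        simp [LinearEquiv.conj_apply, hφ]
      rw [← this, LinearMap.trace_conj']
    rw [rho_trace, rho_trace] at htr
    -- at a fixed point, δ₁ 1 a = δ₂ 1 a
    have hkey : ∀ a : A, (1 : ZMod 2) +ᵥ a = a → δ₁ 1 a = δ₂ 1 a := by
      intro a ha
      have hs : ∀ (δ : ZMod 2 → A → ℂˣ),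
          (∑ b : A, if (1 : ZMod 2) +ᵥ b = b then (δ 1 b : ℂ) else 0) = δ 1 a := by
        intro δ
        rw [Finset.sum_eq_single a]
        · simp [ha]
        · intro b _ hb
          have : ¬ ((1 : ZMod 2) +ᵥ b = b) := fun hb' => hb (hfix hb' ha)
          simp [this]
        · intro h; exact absurd (Finset.mem_univ _) h
      have := (hs δ₁).symm.trans (htr.trans (hs δ₂))
      exact Units.ext this
    -- build coboundary
    set δ : ZMod 2 → A → ℂˣ := fun g a => δ₁ g a * (δ₂ g a)⁻¹ with hδ
    have hδ1 : ∀ a : A, δ 1 ((1:ZMod 2) +ᵥ a) * δ 1 a = 1 := by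
      intro a
      have e1 := h₁ 1 1 a
      have e2 := h₂ 1 1 a
      have : δ₁ (1+1) a * (δ₂ (1+1) a)⁻¹ = δ 1 ((1:ZMod 2) +ᵥ a) * δ 1 a := by
        rw [e1, e2, hδ]
        simp only [mul_inv]
        exact mul_mul_mul_comm _ _ _ _
      rw [← this]
      have h11 : (1 + 1 : ZMod 2) = 0 := by decide
      rw [h11, cocycle_zero h₁, cocycle_zero h₂]; simp
    let e := Fintype.equivFin A
    refine ⟨fun a => if e a ≤ e ((1:ZMod 2) +ᵥ a) then 1 else δ 1 ((1:ZMod 2) +ᵥ a), ?_⟩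
    intro g a
    dsimp only
    rcases hg2 g with rfl | rfl
    · rw [zero_vadd]
      have hz : δ 0 a = 1 := by
        show δ₁ 0 a * (δ₂ 0 a)⁻¹ = 1
        rw [cocycle_zero h₁, cocycle_zero h₂]; simp
      rw [hz]; simp
    · by_cases hfa : (1 : ZMod 2) +ᵥ a = a
      · have hk : δ₁ 1 a = δ₂ 1 a := hkey a hfa
        simp only [hfa, if_pos le_rfl]
        have hz : δ 1 a = 1 := by
          show δ₁ 1 a * (δ₂ 1 a)⁻¹ = 1
          rw [hk]; simp
        rw [hz]; simp
      · rcases lt_or_gt_of_ne (fun h : e a = e ((1:ZMod 2) +ᵥ a) => hfa (e.injective h).symm)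
          with hlt | hlt
        · rw [if_pos hlt.le, if_neg (by rw [hinvol]; exact not_le.mpr hlt), hinvol, inv_one,
            mul_one]
        · rw [if_neg (not_le.mpr hlt), if_pos (by rw [hinvol]; exact hlt.le)]
          have := hδ1 a
          have h2 : δ 1 a = (δ 1 ((1:ZMod 2)+ᵥa))⁻¹ := by
            rw [eq_inv_iff_mul_eq_one, mul_comm]; exact this
          rw [one_mul]; exact h2
  · rintro ⟨c, hc⟩
    refine ⟨LinearEquiv.ofLinear
      { toFun := fun x a => ((c a : ℂ))⁻¹ * x a
        map_add' := by intro x y; funext a; simp; ring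
        map_smul' := by intro r x; funext a; simp; ring }
      { toFun := fun x a => (c a : ℂ) * x a
        map_add' := by intro x y; funext a; simp; ring
        map_smul' := by intro r x; funext a; simp; ring }
      (by ext x a; simp)
      (by ext x a; simp [mul_comm, mul_assoc]), ?_⟩
    intro g x
    funext b
    simp only [LinearEquiv.ofLinear_apply, LinearMap.coe_mk, AddHom.coe_mk, rho_apply]
    have hcb := hc g (-g +ᵥ b)
    have hb : g +ᵥ (-g +ᵥ b) = b := by rw [vadd_vadd, add_neg_cancel, zero_vadd]
    rw [hb] at hcb
    have : (δ₁ g (-g +ᵥ b) : ℂ) * (δ₂ g (-g +ᵥ b) : ℂ)⁻¹ = (c b : ℂ) * ((c (-g +ᵥ b) : ℂ))⁻¹ := by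
      exact_mod_cast congrArg (Units.val) hcb
    have hδ2 : (δ₂ g (-g +ᵥ b) : ℂ) ≠ 0 := Units.ne_zero _
    have hcb' : (c (-g +ᵥ b) : ℂ) ≠ 0 := Units.ne_zero _
    have hcbb : (c b : ℂ) ≠ 0 := Units.ne_zero _
    field_simp at this ⊢
    linear_combination x (-g +ᵥ b) * this
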